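/- Fix α ≥ 0 and a positive integer n. Let u : [0,∞) → (ℤ/nℤ → [0,∞)) be a solution of the discrete scheme, i.e. for every x ∈ ℤ/nℤ the map t ↦ u_t(x) is differentiable with (d/dt) u_t(x) = Δ_n(φ_n ∘ u_t)(x) for all t ≥ 0. Then for every t ≥ 0, min_{x ∈ ℤ/nℤ} u_0(x) ≤ min_{x ∈ ℤ/nℤ} u_t(x) ≤ max_{x ∈ ℤ/nℤ} u_t(x) ≤ max_{x ∈ ℤ/nℤ} u_0(x) (weak maximum principle). -/

import Mathlib

/-- `φ_n(u) = n^α φ(n^α u)` with `φ(ρ) = ρ/(1+ρ)`. -/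
noncomputable def phin (α : ℝ) (n : ℕ) (u : ℝ) : ℝ :=
  (n : ℝ) ^ α * ((n : ℝ) ^ α * u / (1 + (n : ℝ) ^ α * u))

/-- The discrete Laplacian on `ℤ/nℤ`: `Δ_n f(x) = n² (f(x+1) + f(x−1) − 2 f(x))`. -/
def discLap (n : ℕ) (f : ZMod n → ℝ) (x : ZMod n) : ℝ :=
  (n : ℝ) ^ 2 * (f (x + 1) + f (x - 1) - 2 * f x)

/-- `φ_n` is monotone on nonnegative reals. -/
lemma phin_mono (α : ℝ) (n : ℕ) [NeZero n] {a b : ℝ} (ha : 0 ≤ a) (hab : a ≤ b) :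
    phin α n a ≤ phin α n b := by
  have hn : (0 : ℝ) < (n : ℝ) := by
    exact_mod_cast Nat.pos_of_ne_zero (NeZero.ne n)
  have hp : (0 : ℝ) < (n : ℝ) ^ α := Real.rpow_pos_of_pos hn α
  have hb : 0 ≤ b := ha.trans hab
  have hda : (0 : ℝ) < 1 + (n : ℝ) ^ α * a := by positivity
  have hdb : (0 : ℝ) < 1 + (n : ℝ) ^ α * b := by positivity
  unfold phin
  apply mul_le_mul_of_nonneg_left _ hp.le
  rw [div_le_div_iff₀ hda hdb]
  nlinarith [mul_le_mul_of_nonneg_left hab hp.le]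

open Set Filter Topology in
/-- General discrete maximum-decay lemma: if each coordinate is differentiable with
derivative `d t x`, and at any time the derivative at any coordinate achieving the
maximum is nonpositive, then the maximum is nonincreasing. -/
lemma max_decay {n : ℕ} [NeZero n] (u d : ℝ → ZMod n → ℝ)
    (hu : ∀ t, 0 ≤ t → ∀ x, HasDerivWithinAt (fun s => u s x) (d t x) (Set.Ici 0) t)
    (hd : ∀ t, 0 ≤ t → ∀ x, (∀ y, u t y ≤ u t x) → d t x ≤ 0)
    {t : ℝ} (ht : 0 ≤ t) : sSup (Set.range (u t)) ≤ sSup (Set.range (u 0)) := by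
  have hne : (Finset.univ : Finset (ZMod n)).Nonempty := Finset.univ_nonempty
  set F : ℝ → ℝ := fun s => Finset.univ.sup' hne (u s) with hF
  have hFeq : ∀ s, sSup (Set.range (u s)) = F s := by
    intro s
    apply le_antisymm
    · apply csSup_le (Set.range_nonempty _)
      rintro _ ⟨x, rfl⟩
      exact Finset.le_sup' _ (Finset.mem_univ x)
    · exact Finset.sup'_le _ _ fun x _ =>
        le_csSup (Set.finite_range _).bddAbove (Set.mem_range_self x)
  rw [hFeq, hFeq]
  -- maximum of each time slice is attained, and dominates all coordinates
  have hattain : ∀ s : ℝ, ∃ x : ZMod n, F s = u s x := by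
    intro s
    obtain ⟨x, _, hx⟩ := Finset.exists_mem_eq_sup' hne (u s)
    exact ⟨x, hx⟩
  have hle : ∀ (s : ℝ) (x : ZMod n), u s x ≤ F s := fun s x =>
    Finset.le_sup' _ (Finset.mem_univ x)
  -- continuity of F on [0, t]
  have hcontF : ContinuousOn F (Set.Icc 0 t) := by
    intro s hs
    exact Filter.Tendsto.finset_sup'_nhds_apply hne fun x _ =>
      ((hu s hs.1 x).continuousWithinAt.mono
        (fun z hz => hz.1 : Set.Icc (0:ℝ) t ⊆ Set.Ici 0))
  -- apply the fencing theorem with constant boundary `B = F 0`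
  have main : ∀ ⦃s : ℝ⦄, s ∈ Set.Icc 0 t → F s ≤ F 0 := by
    refine image_le_of_liminf_slope_right_le_deriv_boundary (B := fun _ => F 0)
      (B' := fun _ => 0) hcontF le_rfl
      continuousOn_const (fun s _ => hasDerivWithinAt_const s _ (F 0)) ?_
    intro s hs r hr
    obtain ⟨x₀, hx₀⟩ := hattain s
    have hmax : ∀ y, u s y ≤ u s x₀ := fun y => (hle s y).trans_eq hx₀
    have hs0 : (0 : ℝ) ≤ s := hs.1
    -- slope of each coordinate tends to its derivative from the right
    have hslope : ∀ x : ZMod n,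
        Tendsto (slope (fun z => u z x) s) (𝓝[>] s) (𝓝 (d s x)) := by
      intro x
      exact (hasDerivWithinAt_iff_tendsto_slope' <| lt_irrefl s).1
        (((hu s hs0 x).mono (Set.Ici_subset_Ici.2 hs0)).Ioi_of_Ici)
    have hcont : ∀ x : ZMod n,
        Tendsto (fun z => u z x) (𝓝[>] s) (𝓝 (u s x)) := by
      intro x
      exact (hu s hs0 x).continuousWithinAt.mono
        (fun z hz => hs0.trans hz.le : Set.Ioi s ⊆ Set.Ici 0)
    -- Eventual facts
    have E1 : ∀ᶠ z in 𝓝[>] s, ∀ x : ZMod n,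
        u s x = u s x₀ → slope (fun w => u w x) s z < r := by
      rw [eventually_all]
      intro x
      by_cases hx : u s x = u s x₀
      · have hdx : d s x ≤ 0 := hd s hs0 x fun y => (hmax y).trans_eq hx.symm
        exact ((hslope x).eventually_lt_const (lt_of_le_of_lt hdx hr)).mono
          fun z hz _ => hz
      · exact Filter.Eventually.of_forall fun z h => absurd h hx
    have E2 : ∀ᶠ z in 𝓝[>] s, ∀ x : ZMod n,
        ¬ u s x = u s x₀ → u z x < (u s x + u s x₀) / 2 := by
      rw [eventually_all]
      intro x
      by_cases hx : u s x = u s x₀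
      · exact Filter.Eventually.of_forall fun z h => absurd hx h
      · have hlt : u s x < (u s x + u s x₀) / 2 := by
          have := lt_of_le_of_ne (hmax x) hx
          linarith
        exact ((hcont x).eventually_lt_const hlt).mono fun z hz _ => hz
    have E3 : ∀ᶠ z in 𝓝[>] s, ∀ x : ZMod n,
        ¬ u s x = u s x₀ → (u s x + u s x₀) / 2 < u z x₀ := by
      rw [eventually_all]
      intro x
      by_cases hx : u s x = u s x₀
      · exact Filter.Eventually.of_forall fun z h => absurd hx h
      · have hlt : (u s x + u s x₀) / 2 < u s x₀ := by
          have := lt_of_le_of_ne (hmax x) hx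
          linarith
        exact ((hcont x₀).eventually_const_lt hlt).mono fun z hz _ => hz
    refine (((E1.and E2).and E3).mono ?_).frequently
    rintro z ⟨⟨h1, h2⟩, h3⟩
    obtain ⟨x₁, hx₁⟩ := hattain z
    have hx₁max : ∀ y, u z y ≤ u z x₁ := fun y => (hle z y).trans_eq hx₁
    by_cases hc : u s x₁ = u s x₀
    · have hslopes : slope F s z = slope (fun w => u w x₁) s z := by
        rw [slope_def_field, slope_def_field, hx₁, hx₀, ← hc]
      rw [hslopes]
      exact h1 x₁ hc
    · exact absurd ((h2 x₁ hc).trans ((h3 x₁ hc).trans_le (hx₁max x₀))) (lt_irrefl _)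
  exact main (Set.right_mem_Icc.2 ht)

/-- weak maximum principle: if `u` is a nonnegative solution of the
discrete scheme `(d/dt) u_t(x) = Δ_n(φ_n ∘ u_t)(x)` on `[0,∞)`, then for every `t ≥ 0`,
`min_x u_0(x) ≤ min_x u_t(x) ≤ max_x u_t(x) ≤ max_x u_0(x)`. -/
theorem discrete_scheme_weak_maximum_principle
    (α : ℝ) (hα : 0 ≤ α) (n : ℕ) [NeZero n]
    (u : ℝ → ZMod n → ℝ)
    (hpos : ∀ t, 0 ≤ t → ∀ x, 0 ≤ u t x)
    (hu : ∀ t, 0 ≤ t → ∀ x : ZMod n,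
      HasDerivWithinAt (fun s => u s x)
        (discLap n (fun y => phin α n (u t y)) x) (Set.Ici 0) t) :
    ∀ t, 0 ≤ t →
      sInf (Set.range (u 0)) ≤ sInf (Set.range (u t)) ∧
      sInf (Set.range (u t)) ≤ sSup (Set.range (u t)) ∧
      sSup (Set.range (u t)) ≤ sSup (Set.range (u 0)) := by
  intro t ht
  refine ⟨?_, ?_, ?_⟩
  · -- minimum principle, via the maximum principle for `-u`
    have hmax := max_decay (fun s x => -(u s x))
      (fun s x => -(discLap n (fun y => phin α n (u s y)) x))
      (fun s hs x => (hu s hs x).neg) ?_ ht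
    · have hrange : ∀ s : ℝ, Set.range (fun x => -(u s x)) = -(Set.range (u s)) := by
        intro s
        ext z
        simp only [Set.mem_range, Set.mem_neg]
        constructor
        · rintro ⟨x, rfl⟩; exact ⟨x, by ring⟩
        · rintro ⟨x, hx⟩; exact ⟨x, by linarith⟩
      rw [hrange, hrange] at hmax
      rw [Real.sInf_def, Real.sInf_def]
      linarith
    · -- at a minimum of `u`, the Laplacian is nonnegative
      intro s hs x hx
      show -(discLap n (fun y => phin α n (u s y)) x) ≤ 0
      have hmono : ∀ y, u s x ≤ u s y := fun y => neg_le_neg_iff.mp (hx y)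
      have h1 : phin α n (u s x) ≤ phin α n (u s (x + 1)) :=
        phin_mono α n (hpos s hs x) (hmono (x + 1))
      have h2 : phin α n (u s x) ≤ phin α n (u s (x - 1)) :=
        phin_mono α n (hpos s hs x) (hmono (x - 1))
      have hn2 : (0 : ℝ) ≤ (n : ℝ) ^ 2 := sq_nonneg _
      unfold discLap
      nlinarith
  · exact csInf_le_csSup (Set.range_nonempty _) (Set.finite_range _).bddBelow
      (Set.finite_range _).bddAbove
  · refine max_decay u (fun s x => discLap n (fun y => phin α n (u s y)) x)
      (fun s hs x => hu s hs x) ?_ ht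
    -- at a maximum of `u`, the Laplacian is nonpositive
    intro s hs x hx
    show discLap n (fun y => phin α n (u s y)) x ≤ 0
    have h1 : phin α n (u s (x + 1)) ≤ phin α n (u s x) :=
      phin_mono α n (hpos s hs (x + 1)) (hx (x + 1))
    have h2 : phin α n (u s (x - 1)) ≤ phin α n (u s x) :=
      phin_mono α n (hpos s hs (x - 1)) (hx (x - 1))
    have hn2 : (0 : ℝ) ≤ (n : ℝ) ^ 2 := sq_nonneg _
    unfold discLap
    nlinarith
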